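/- (Main theorem.) Let W be a block positive Hermitian matrix on ℂ^m⊗ℂ^m and let λ > 0 be such that A_{kl}^{(W)}(ψ) ≥ −λ for every unit vector ψ ∈ ℂ^m⊗ℂ^m, every Schmidt decomposition of ψ, and all k ≠ l. Then for every α ≥ λ, the rescaled witness α^{-1}W satisfies the condition −⟨ψ, (α^{-1}W)ψ⟩ ≤ Σ_{i≠j} √(μ_i μ_j) for every unit vector ψ with Schmidt coefficients μ_1,…,μ_m. -/
import Mathlib


open scoped BigOperators ComplexConjugate ComplexOrder
open Finset Matrix

noncomputable section

/-- Tensor product `a⊗b` of two vectors, `(a⊗b)(x,y) = aₓ·b_y`. -/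
def tp {m n : ℕ} (a : Fin m → ℂ) (b : Fin n → ℂ) : Fin m × Fin n → ℂ :=
  fun p => a p.1 * b p.2

/-- The standard Hermitian inner product `⟨f,g⟩ = ∑ i, conj (f i) * g i`. -/
def hip {ι : Type} [Fintype ι] (f g : ι → ℂ) : ℂ := ∑ i, conj (f i) * g i

/-- An orthonormal family of vectors. -/
def Onb {m r : ℕ} (a : Fin r → Fin m → ℂ) : Prop :=
  ∀ i j, hip (a i) (a j) = if i = j then 1 else 0

/-- `IsSchmidt ψ a b μ` : `ψ = ∑ i, √μᵢ aᵢ⊗bᵢ` is a Schmidt decomposition of `ψ`. -/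
def IsSchmidt {m : ℕ} (ψ : Fin m × Fin m → ℂ)
    (a b : Fin m → Fin m → ℂ) (μ : Fin m → ℝ) : Prop :=
  Onb a ∧ Onb b ∧ (∀ i, 0 ≤ μ i) ∧ ∑ i, μ i = 1 ∧
  ψ = fun p => ∑ i, (Real.sqrt (μ i) : ℂ) * tp (a i) (b i) p

/-- `A_{kl}^{(W)}(ψ) = Re⟨a_k⊗b_k, W(a_l⊗b_l)⟩`. -/
def Acoef {m : ℕ} (W : Matrix (Fin m × Fin m) (Fin m × Fin m) ℂ)
    (a b : Fin m → Fin m → ℂ) (k l : Fin m) : ℝ :=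
  (hip (tp (a k) (b k)) (W.mulVec (tp (a l) (b l)))).re

/-- Block positivity: `⟨a⊗b, W(a⊗b)⟩ ≥ 0` for all `a`, `b`. -/
def BlockPos {m : ℕ} (W : Matrix (Fin m × Fin m) (Fin m × Fin m) ℂ) : Prop :=
  ∀ a b : Fin m → ℂ, 0 ≤ (hip (tp a b) (W.mulVec (tp a b))).re

/-- The reduced matrix `ρ_A` of a vector `ψ`. -/
def rhoA {m n : ℕ} (ψ : Fin m × Fin n → ℂ) : Matrix (Fin m) (Fin m) ℂ :=
  Matrix.of fun x y => ∑ z, ψ (x, z) * conj (ψ (y, z))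

/-- Concurrence of a pure state: `C(ψ) = √(2(1 − Tr ρ_A²))`. -/
def concP {m n : ℕ} (ψ : Fin m × Fin n → ℂ) : ℝ :=
  Real.sqrt (2 * (1 - (Matrix.trace (rhoA ψ * rhoA ψ)).re))

/-- Convex-roof concurrence of a mixed state. -/
def concM {m n : ℕ} (ρ : Matrix (Fin m × Fin n) (Fin m × Fin n) ℂ) : ℝ :=
  sInf { c : ℝ | ∃ (N : ℕ) (p : Fin N → ℝ) (ψ : Fin N → (Fin m × Fin n → ℂ)),
    (∀ i, 0 < p i) ∧ ∑ i, p i = 1 ∧ (∀ i, hip (ψ i) (ψ i) = 1) ∧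
    ρ = ∑ i, (p i : ℂ) • Matrix.of (fun x y => ψ i x * conj (ψ i y)) ∧
    c = ∑ i, p i * concP (ψ i) }



lemma hip_sum_left' {ι : Type} [Fintype ι] {κ : Type} [Fintype κ]
    (c : κ → ℂ) (f : κ → ι → ℂ) (g : ι → ℂ) :
    hip (fun p => ∑ k, c k * f k p) g = ∑ k, conj (c k) * hip (f k) g := by
  simp only [hip, map_sum, _root_.map_mul, Finset.sum_mul, Finset.mul_sum]
  rw [Finset.sum_comm]
  exact Finset.sum_congr rfl fun k _ => Finset.sum_congr rfl fun i _ => by ring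

lemma hip_sum_right' {ι : Type} [Fintype ι] {κ : Type} [Fintype κ]
    (c : κ → ℂ) (f : κ → ι → ℂ) (g : ι → ℂ) :
    hip g (fun p => ∑ k, c k * f k p) = ∑ k, c k * hip g (f k) := by
  simp only [hip, Finset.mul_sum]
  rw [Finset.sum_comm]
  exact Finset.sum_congr rfl fun k _ => Finset.sum_congr rfl fun i _ => by ring

lemma hip_expand' {m : ℕ} (W : Matrix (Fin m × Fin m) (Fin m × Fin m) ℂ)
    (ψ : Fin m × Fin m → ℂ) (a b : Fin m → Fin m → ℂ) (μ : Fin m → ℝ)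
    (hψ : ψ = fun p => ∑ i, (Real.sqrt (μ i) : ℂ) * tp (a i) (b i) p) :
    hip ψ (W.mulVec ψ) = ∑ l, ∑ k, (Real.sqrt (μ l) : ℂ) * ((Real.sqrt (μ k) : ℂ)
      * hip (tp (a k) (b k)) (W.mulVec (tp (a l) (b l)))) := by
  have h1 : W.mulVec ψ = fun p => ∑ l, (Real.sqrt (μ l) : ℂ) * (W.mulVec (tp (a l) (b l))) p := by
    funext p
    simp only [Matrix.mulVec, dotProduct, hψ, Finset.mul_sum]
    rw [Finset.sum_comm]
    exact Finset.sum_congr rfl fun l _ => Finset.sum_congr rfl fun q _ => by ring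
  rw [h1, hip_sum_right']
  refine Finset.sum_congr rfl fun l _ => ?_
  rw [hψ, hip_sum_left']
  simp only [Complex.conj_ofReal, Finset.mul_sum]

/-- Main theorem: if `W` is a block positive Hermitian matrix and `λ > 0` is
such that `A_{kl}^{(W)}(ψ) ≥ −λ` for every unit vector `ψ`, every Schmidt
decomposition of `ψ` and all `k ≠ l`, then for every `α ≥ λ` the rescaled
witness `α⁻¹W` satisfies `−⟨ψ, (α⁻¹W)ψ⟩ ≤ ∑_{i≠j} √(μᵢ μⱼ)` for every unit
vector `ψ` with Schmidt coefficients `μ`. -/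
theorem stmt5 {m : ℕ} (W : Matrix (Fin m × Fin m) (Fin m × Fin m) ℂ)
    (hW : W.IsHermitian) (hBP : BlockPos W)
    (lam : ℝ) (hlam : 0 < lam)
    (hA : ∀ (ψ : Fin m × Fin m → ℂ) (a b : Fin m → Fin m → ℂ) (μ : Fin m → ℝ),
      hip ψ ψ = 1 → IsSchmidt ψ a b μ → ∀ k l, k ≠ l → -lam ≤ Acoef W a b k l)
    (α : ℝ) (hα : lam ≤ α) :
    ∀ (ψ : Fin m × Fin m → ℂ) (a b : Fin m → Fin m → ℂ) (μ : Fin m → ℝ),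
      hip ψ ψ = 1 → IsSchmidt ψ a b μ →
      -(hip ψ ((((α : ℂ)⁻¹) • W).mulVec ψ)).re
        ≤ ∑ i, ∑ j, (if i ≠ j then Real.sqrt (μ i * μ j) else 0) := by
  intro ψ a b μ hψ1 hS
  obtain ⟨ha, hb, hμ0, hμ1, hψ⟩ := hS
  have hα0 : 0 < α := lt_of_lt_of_le hlam hα
  -- real part of ⟨ψ, Wψ⟩
  have expand := hip_expand' W ψ a b μ hψ
  set R : ℝ := (hip ψ (W.mulVec ψ)).re with hR
  have hRsum : R = ∑ l, ∑ k, Real.sqrt (μ l) * (Real.sqrt (μ k) * Acoef W a b k l) := by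
    rw [hR, expand, Complex.re_sum]
    refine Finset.sum_congr rfl fun l _ => ?_
    rw [Complex.re_sum]
    refine Finset.sum_congr rfl fun k _ => ?_
    rw [Complex.re_ofReal_mul, Complex.re_ofReal_mul]
    rfl
  set S : ℝ := ∑ i, ∑ j, (if i ≠ j then Real.sqrt (μ i * μ j) else 0) with hSdef
  have hS0 : 0 ≤ S := by
    refine Finset.sum_nonneg fun i _ => Finset.sum_nonneg fun j _ => ?_
    split
    · exact Real.sqrt_nonneg _
    · exact le_rfl
  have hkey : -R ≤ lam * S := by
    rw [hRsum, ← Finset.sum_neg_distrib]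
    have : lam * S = ∑ l, ∑ k, (if k ≠ l then lam * Real.sqrt (μ l * μ k) else 0) := by
      rw [hSdef, Finset.mul_sum]
      refine Finset.sum_congr rfl fun l _ => ?_
      rw [Finset.mul_sum]
      refine Finset.sum_congr rfl fun k _ => ?_
      by_cases h : l = k
      · simp [h]
      · simp [h, Ne.symm h]
    rw [this]
    refine Finset.sum_le_sum fun l _ => ?_
    rw [← Finset.sum_neg_distrib]
    refine Finset.sum_le_sum fun k _ => ?_
    have h1 : 0 ≤ Real.sqrt (μ l) := Real.sqrt_nonneg _
    have h2 : 0 ≤ Real.sqrt (μ k) := Real.sqrt_nonneg _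
    by_cases hkl : k = l
    · subst hkl
      have := hBP (a k) (b k)
      simp only [if_neg (by simp : ¬ (k ≠ k))]
      have h3 : 0 ≤ Acoef W a b k k := this
      nlinarith [mul_nonneg h1 (mul_nonneg h2 h3)]
    · have hAkl : -lam ≤ Acoef W a b k l :=
        hA ψ a b μ hψ1 ⟨ha, hb, hμ0, hμ1, hψ⟩ k l hkl
      simp only [if_pos hkl]
      rw [Real.sqrt_mul (hμ0 l)]
      nlinarith [mul_le_mul_of_nonneg_left hAkl (mul_nonneg h1 h2)]
  -- rescaling
  have hsmul : (hip ψ ((((α : ℂ)⁻¹) • W).mulVec ψ)).re = α⁻¹ * R := by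
    rw [Matrix.smul_mulVec]
    have : hip ψ ((α : ℂ)⁻¹ • W.mulVec ψ) = (α : ℂ)⁻¹ * hip ψ (W.mulVec ψ) := by
      simp only [hip, Pi.smul_apply, smul_eq_mul, Finset.mul_sum]
      exact Finset.sum_congr rfl fun i _ => by ring
    rw [this, ← Complex.ofReal_inv, Complex.re_ofReal_mul]
  rw [hsmul]
  have hinv0 : (0:ℝ) ≤ α⁻¹ := le_of_lt (inv_pos.mpr hα0)
  have step1 : -(α⁻¹ * R) = α⁻¹ * (-R) := by ring
  rw [step1]
  calc α⁻¹ * (-R) ≤ α⁻¹ * (lam * S) := mul_le_mul_of_nonneg_left hkey hinv0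
    _ ≤ α⁻¹ * (α * S) := mul_le_mul_of_nonneg_left
        (mul_le_mul_of_nonneg_right hα hS0) hinv0
    _ = S := by field_simp


end
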